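/- In a connected graph with no separating (bridge) edges, every edge is contained in a unique C1-set, where two edges belong to the same C1-set if and only if removing both of them disconnects the graph. -/
import Mathlib


structure Multigraph (V E : Type) where
  ends : E → Sym2 V

namespace Multigraph

variable {V E : Type} (G : Multigraph V E)

def adjOn (F : Set E) (v w : V) : Prop := ∃ e ∈ F, G.ends e = s(v, w)

def ConnectedOn (F : Set E) : Prop := ∀ v w : V, Relation.ReflTransGen (G.adjOn F) v w

def Connected : Prop := G.ConnectedOn Set.univ

def Bridgeless : Prop := ∀ e : E, G.ConnectedOn ({e} : Set E)ᶜ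

def SameC1 (e f : E) : Prop := e = f ∨ ¬ G.ConnectedOn ({e, f} : Set E)ᶜ

def IsC1Set (S : Set E) : Prop := ∃ e : E, S = {f | G.SameC1 e f}

def compRel (S : Set E) (v w : V) : Prop := ∃ e ∉ S, G.ends e = s(v, w)

def contract (S : Set E) : Multigraph (Quot (G.compRel S)) {e // e ∈ S} :=
  ⟨fun e => (G.ends e.1).map (Quot.mk (G.compRel S))⟩

noncomputable def degree (v : V) : ℕ :=
  Nat.card {e : E // v ∈ G.ends e ∧ G.ends e ≠ s(v, v)} +
    2 * Nat.card {e : E // G.ends e = s(v, v)}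

def IsCycleGraph : Prop :=
  G.Connected ∧ 1 ≤ Nat.card E ∧ Nat.card E = Nat.card V ∧ ∀ v : V, G.degree v = 2

noncomputable def numComponents : ℕ := Nat.card (Quot (G.compRel (∅ : Set E)))

noncomputable def b1 : ℤ := (Nat.card E : ℤ) - (Nat.card V : ℤ) + (G.numComponents : ℤ)

end Multigraph

namespace Stmt0Aux

open Multigraph

variable {V E : Type}

/-- The set of edges crossing a vertex cut `A`. -/
def Cross (G : Multigraph V E) (A : Set V) : Set E :=
  {h | ∃ a b, G.ends h = s(a, b) ∧ a ∈ A ∧ b ∉ A}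

lemma cross_compl (G : Multigraph V E) (A : Set V) : Cross G Aᶜ = Cross G A := by
  ext h
  constructor
  · rintro ⟨a, b, hab, ha, hb⟩
    exact ⟨b, a, by rw [hab, Sym2.eq_swap], by simpa using hb, by simpa using ha⟩
  · rintro ⟨a, b, hab, ha, hb⟩
    exact ⟨b, a, by rw [hab, Sym2.eq_swap], by simpa using hb, by simpa using ha⟩

lemma disconnected_of_cut (G : Multigraph V E) {A : Set V} {F : Set E}
    (hA : A.Nonempty) (hA' : Aᶜ.Nonempty) (hcr : ∀ x ∈ Cross G A, x ∉ F) :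
    ¬ G.ConnectedOn F := by
  intro hcon
  obtain ⟨v, hv⟩ := hA
  obtain ⟨w, hw⟩ := hA'
  have key : ∀ x, Relation.ReflTransGen (G.adjOn F) v x → x ∈ A := by
    intro x hx
    induction hx with
    | refl => exact hv
    | tail _ hbc ih =>
        rename_i b c _
        by_contra hc
        obtain ⟨e, heF, he⟩ := hbc
        exact hcr e ⟨b, c, he, ih, hc⟩ heF
  exact hw (key w (hcon v w))

lemma cut_of_disconnected (G : Multigraph V E) {F : Set E}
    (h : ¬ G.ConnectedOn F) :
    ∃ A : Set V, A.Nonempty ∧ Aᶜ.Nonempty ∧ ∀ x ∈ Cross G A, x ∉ F := by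
  unfold ConnectedOn at h
  push_neg at h
  obtain ⟨v, w, hvw⟩ := h
  refine ⟨{x | Relation.ReflTransGen (G.adjOn F) v x}, ⟨v, Relation.ReflTransGen.refl⟩,
    ⟨w, hvw⟩, ?_⟩
  rintro x ⟨a, b, hab, ha, hb⟩ hxF
  exact hb (Relation.ReflTransGen.tail ha ⟨x, hxF, hab⟩)

/-- In a bridgeless graph, if `A` is a proper cut crossed only by edges in `{e, f}`,
then `e` crosses `A`. -/
lemma mem_cross (G : Multigraph V E) (hbl : G.Bridgeless) {A : Set V} {e f : E}
    (hA : A.Nonempty) (hA' : Aᶜ.Nonempty)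
    (hcr : ∀ x ∈ Cross G A, x = e ∨ x = f) : e ∈ Cross G A := by
  by_contra he
  refine disconnected_of_cut G hA hA' (fun x hx hxF => ?_) (hbl f)
  rcases hcr x hx with h | h
  · exact he (h ▸ hx)
  · exact hxF (by simp [h])

/-- Main combinatorial step for transitivity. -/
lemma trans_aux (G : Multigraph V E) (hbl : G.Bridgeless) {e f g : E}
    (hef : e ≠ f) (hfg : f ≠ g) (heg : e ≠ g)
    (h1 : ¬ G.ConnectedOn ({e, f} : Set E)ᶜ)
    (h2 : ¬ G.ConnectedOn ({f, g} : Set E)ᶜ) :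
    ¬ G.ConnectedOn ({e, g} : Set E)ᶜ := by
  obtain ⟨A, hA, hA', hcrA⟩ := cut_of_disconnected G h1
  obtain ⟨C, hC, hC', hcrC⟩ := cut_of_disconnected G h2
  have hcrA' : ∀ x ∈ Cross G A, x = e ∨ x = f := by
    intro x hx
    have := hcrA x hx
    simp only [Set.mem_compl_iff, Set.mem_insert_iff, Set.mem_singleton_iff, not_not] at this
    exact this
  have hcrC' : ∀ x ∈ Cross G C, x = f ∨ x = g := by
    intro x hx
    have := hcrC x hx
    simp only [Set.mem_compl_iff, Set.mem_insert_iff, Set.mem_singleton_iff, not_not] at this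
    exact this
  -- f crosses both cuts, e crosses A, g crosses C
  have hfA : f ∈ Cross G A := by
    have := mem_cross G hbl hA hA' (fun x hx => (hcrA' x hx).symm)
    exact this
  have heA : e ∈ Cross G A := mem_cross G hbl hA hA' hcrA'
  have hfC : f ∈ Cross G C := mem_cross G hbl hC hC' hcrC'
  obtain ⟨a, b, hfab, haA, hbA⟩ := hfA
  obtain ⟨c, d, hfcd, hcC, hdC⟩ := hfC
  -- normalize C so that a ∈ C and b ∉ C
  have : ∃ C' : Set V, C'.Nonempty ∧ C'ᶜ.Nonempty ∧
      (∀ x ∈ Cross G C', x = f ∨ x = g) ∧ a ∈ C' ∧ b ∉ C' := by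
    rw [hfab] at hfcd
    rcases Sym2.eq_iff.mp hfcd with ⟨hac, hbd⟩ | ⟨had, hbc⟩
    · exact ⟨C, hC, hC', hcrC', hac ▸ hcC, hbd ▸ hdC⟩
    · refine ⟨Cᶜ, hC', by simpa using hC, ?_, (by simpa using had ▸ hdC), (by simpa using hbc ▸ hcC)⟩
      intro x hx
      exact hcrC' x (by rwa [cross_compl] at hx)
  obtain ⟨C, hC, hC', hcrC', haC, hbC⟩ := this
  clear hcrC hcC hdC hfcd h1 h2
  -- the new cut
  set X : Set V := (A ∩ C) ∪ (Aᶜ ∩ Cᶜ) with hX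
  have haX : a ∈ X := Or.inl ⟨haA, haC⟩
  -- every edge crossing X is e or g
  have hcrX : ∀ x ∈ Cross G X, x = e ∨ x = g := by
    rintro x ⟨p, q, hpq, hpX, hqX⟩
    have hxf : x ≠ f := by
      rintro rfl
      rw [hfab] at hpq
      rcases Sym2.eq_iff.mp hpq.symm with ⟨h1, h2⟩ | ⟨h1, h2⟩
      · exact hqX (h2 ▸ Or.inr ⟨hbA, hbC⟩)
      · exact hqX (h2 ▸ Or.inl ⟨haA, haC⟩)
    -- x crosses A or crosses C
    have : x ∈ Cross G A ∨ x ∈ Cross G C := by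
      rcases hpX with ⟨hpA, hpC⟩ | ⟨hpA, hpC⟩
      · by_cases hqA : q ∈ A
        · have hqC : q ∉ C := fun hqC => hqX (Or.inl ⟨hqA, hqC⟩)
          exact Or.inr ⟨p, q, hpq, hpC, hqC⟩
        · exact Or.inl ⟨p, q, hpq, hpA, hqA⟩
      · by_cases hqA : q ∈ A
        · exact Or.inl ⟨q, p, by rw [hpq, Sym2.eq_swap], hqA, hpA⟩
        · have hqC : q ∈ C := by
            by_contra hqC
            exact hqX (Or.inr ⟨hqA, hqC⟩)
          exact Or.inr ⟨q, p, by rw [hpq, Sym2.eq_swap], hqC, hpC⟩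
    rcases this with h | h
    · rcases hcrA' x h with h' | h'
      · exact Or.inl h'
      · exact absurd h' hxf
    · rcases hcrC' x h with h' | h'
      · exact absurd h' hxf
      · exact Or.inr h'
  -- Xᶜ is nonempty: use the edge e, which crosses A but not C
  have heC : e ∉ Cross G C := by
    intro h
    rcases hcrC' e h with h' | h'
    · exact hef h'
    · exact heg h'
  obtain ⟨p, q, hepq, hpA, hqA⟩ := heA
  have hXc : Xᶜ.Nonempty := by
    by_cases hpC : p ∈ C
    · by_cases hqC : q ∈ C
      · exact ⟨q, fun hq => hq.elim (fun h => hqA h.1) (fun h => h.2 hqC)⟩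
      · exact absurd ⟨p, q, hepq, hpC, hqC⟩ heC
    · by_cases hqC : q ∈ C
      · exact absurd ⟨q, p, by rw [hepq, Sym2.eq_swap], hqC, hpC⟩ heC
      · exact ⟨p, fun hp => hp.elim (fun h => hpC h.2) (fun h => h.1 hpA)⟩
  refine disconnected_of_cut G ⟨a, haX⟩ hXc (fun x hx hxF => ?_)
  rcases hcrX x hx with h | h <;> exact hxF (by simp [h])

end Stmt0Aux

/-- In a finite connected multigraph with no separating (bridge) edges,
the relation "e = f or deleting both e and f disconnects the graph" is an equivalence
relation on edges, and hence every edge is contained in a unique C1-set. -/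
theorem stmt0 {V E : Type} [Finite V] [Finite E] (G : Multigraph V E)
    (hconn : G.Connected) (hbl : G.Bridgeless) :
    Equivalence G.SameC1 ∧ ∀ e : E, ∃! S : Set E, G.IsC1Set S ∧ e ∈ S := by
  have hequiv : Equivalence G.SameC1 := by
    constructor
    · intro e; exact Or.inl rfl
    · rintro e f (rfl | h)
      · exact Or.inl rfl
      · exact Or.inr (by rwa [Set.pair_comm])
    · rintro e f g (rfl | h1) h2
      · exact h2
      · rcases h2 with rfl | h2
        · exact Or.inr h1
        · by_cases hef : e = f
          · subst hef; exact Or.inr h2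
          · by_cases hfg : f = g
            · subst hfg; exact Or.inr h1
            · by_cases heg : e = g
              · exact Or.inl heg
              · exact Or.inr (Stmt0Aux.trans_aux G hbl hef hfg heg h1 h2)
  refine ⟨hequiv, fun e => ?_⟩
  refine ⟨{f | G.SameC1 e f}, ⟨⟨e, rfl⟩, hequiv.refl e⟩, ?_⟩
  rintro S ⟨⟨e', rfl⟩, he⟩
  ext f
  simp only [Set.mem_setOf_eq]
  exact ⟨fun h => hequiv.trans (hequiv.symm he) h, fun h => hequiv.trans he h⟩
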